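/- For any zero-error distributed source coding scheme (Slepian-Wolf converse): if encoders of rates R₁ and R₂ for sources X and Y (i.i.d. with joint distribution p) allow reconstruction with vanishing error probability, then R₁ ≥ H(X|Y), R₂ ≥ H(Y|X), and R₁ + R₂ ≥ H(X,Y). -/

import Mathlib

open Filter

/-- Shannon entropy (in bits) of a probability mass function on a finite
alphabet (with the convention `0·log 0 = 0`). -/
noncomputable def shannonH {α : Type*} [Fintype α] (q : α → ℝ) : ℝ :=
  -∑ a, q a * Real.logb 2 (q a)

open Finset

lemma shannonH_eq_sum_info {α : Type*} [Fintype α] (q : α → ℝ) :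
    shannonH q = ∑ a, q a * (if q a = 0 then 0 else -Real.logb 2 (q a)) := by
  unfold shannonH
  rw [← Finset.sum_neg_distrib]
  refine Finset.sum_congr rfl fun a _ => ?_
  by_cases h : q a = 0 <;> simp [h] <;> ring

lemma shannonH_equiv {α β : Type*} [Fintype α] [Fintype β] (e : α ≃ β) (q : β → ℝ) :
    shannonH (fun a => q (e a)) = shannonH q := by
  unfold shannonH
  exact congrArg Neg.neg (Equiv.sum_comp e (fun b => q b * Real.logb 2 (q b)))

lemma sw_pair_sum {A B : Type*} [Fintype A] [Fintype B] (N : ℕ)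
    (F : (Fin N → A) → (Fin N → B) → ℝ) :
    ∑ as : Fin N → A, ∑ bs : Fin N → B, F as bs
      = ∑ zs : Fin N → A × B, F (fun k => (zs k).1) (fun k => (zs k).2) := by
  rw [show (∑ as : Fin N → A, ∑ bs : Fin N → B, F as bs)
      = ∑ r : (Fin N → A) × (Fin N → B), F r.1 r.2 from
      (Fintype.sum_prod_type (fun (r : (Fin N → A) × (Fin N → B)) => F r.1 r.2)).symm]
  exact Fintype.sum_equiv
    ⟨fun r k => (r.1 k, r.2 k), fun zs => (fun k => (zs k).1, fun k => (zs k).2),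
      fun r => rfl, fun zs => rfl⟩ _ _ (fun r => rfl)

lemma sw_rate_bound {μ ρ : ℝ} {err : ℕ → ℝ} (herr : Tendsto err atTop (nhds 0))
    (C : ℝ)
    (h : ∀ ε : ℝ, 0 < ε → ∀ N : ℕ, 0 < N →
      1 - err N - C / ((N : ℝ) * ε ^ 2) ≤ (2 : ℝ) ^ ((N : ℝ) * (ρ - μ + ε))) :
    μ ≤ ρ := by
  by_contra hlt
  push_neg at hlt
  set ε : ℝ := (μ - ρ) / 2 with hε
  have hε0 : 0 < ε := by simp [hε]; linarith
  have hc : ρ - μ + ε < 0 := by simp [hε]; linarith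
  -- the RHS tends to 0
  have h2 : Tendsto (fun N : ℕ => (2 : ℝ) ^ ((N : ℝ) * (ρ - μ + ε))) atTop (nhds 0) := by
    have hbase : Tendsto (fun N : ℕ => (N : ℝ) * (ρ - μ + ε)) atTop atBot :=
      tendsto_natCast_atTop_atTop.atTop_mul_const_of_neg hc
    have := Real.tendsto_exp_atBot.comp (hbase.atBot_mul_const (Real.log_pos one_lt_two))
    refine this.congr fun N => ?_
    rw [Real.rpow_def_of_pos two_pos]
    simp [Function.comp, mul_comm]
  have h3 : Tendsto (fun N : ℕ => C / ((N : ℝ) * ε ^ 2)) atTop (nhds 0) := by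
    have : (fun N : ℕ => C / ((N : ℝ) * ε ^ 2))
        = fun N : ℕ => (C / ε ^ 2) * (1 / (N : ℝ)) := by
      funext N; field_simp
    rw [this]
    simpa using (tendsto_one_div_atTop_nhds_zero_nat).const_mul (C / ε ^ 2)
  have e1 := herr.eventually_lt_const (show (0:ℝ) < 1/4 by norm_num)
  have e2 := h2.eventually_lt_const (show (0:ℝ) < 1/4 by norm_num)
  have e3 := h3.eventually_lt_const (show (0:ℝ) < 1/4 by norm_num)
  have e4 : ∀ᶠ N : ℕ in atTop, 0 < N := eventually_gt_atTop 0
  obtain ⟨N, ⟨hN1, hN2⟩, hN3, hN4⟩ := ((e1.and e2).and (e3.and e4)).exists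
  have := h ε hε0 N hN4
  linarith


section SWaux
variable {Z : Type*} [Fintype Z] {P : Z → ℝ}

lemma sw_sum_prod {N : ℕ} (g : Fin N → Z → ℝ) :
    ∑ zs : Fin N → Z, ∏ k, g k (zs k) = ∏ k, ∑ z, g k z :=
  (Fintype.prod_sum g).symm

lemma sw_mass (hPsum : ∑ z, P z = 1) (N : ℕ) :
    ∑ zs : Fin N → Z, ∏ k, P (zs k) = 1 := by
  rw [sw_sum_prod (fun _ z => P z)]; simp [hPsum]

lemma sw_mean (hPsum : ∑ z, P z = 1) (N : ℕ) (h : Z → ℝ) (j : Fin N) :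
    ∑ zs : Fin N → Z, (∏ k, P (zs k)) * h (zs j) = ∑ z, P z * h z := by
  have key : ∀ zs : Fin N → Z, (∏ k, P (zs k)) * h (zs j)
      = ∏ k, (P (zs k) * (if k = j then h (zs k) else 1)) := by
    intro zs
    rw [prod_mul_distrib, prod_ite_eq' univ j (fun k => h (zs k))]; simp
  rw [Finset.sum_congr rfl (fun zs _ => key zs),
    sw_sum_prod (fun k z => P z * (if k = j then h z else 1))]
  rw [Finset.prod_eq_single j]
  · simp
  · intro i _ hi; simp [hi, hPsum]
  · simp

lemma sw_cross (h : Z → ℝ)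
    (hmean : ∑ z, P z * h z = 0) {N : ℕ} {j k : Fin N} (hjk : j ≠ k) :
    ∑ zs : Fin N → Z, (∏ i, P (zs i)) * (h (zs j) * h (zs k)) = 0 := by
  have key : ∀ zs : Fin N → Z, (∏ i, P (zs i)) * (h (zs j) * h (zs k))
      = ∏ i, (P (zs i) * (if i = j then h (zs i) else 1)
          * (if i = k then h (zs i) else 1)) := by
    intro zs
    rw [prod_mul_distrib, prod_mul_distrib, prod_ite_eq' univ j (fun i => h (zs i)),
      prod_ite_eq' univ k (fun i => h (zs i))]
    simp; ring
  rw [Finset.sum_congr rfl (fun zs _ => key zs),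
    sw_sum_prod (fun i z => P z * (if i = j then h z else 1) * (if i = k then h z else 1))]
  refine Finset.prod_eq_zero (mem_univ j) ?_
  simpa [hjk] using hmean

lemma sw_var (hPsum : ∑ z, P z = 1) (N : ℕ) (h : Z → ℝ)
    (hmean : ∑ z, P z * h z = 0) :
    ∑ zs : Fin N → Z, (∏ i, P (zs i)) * (∑ j, h (zs j))^2
      = N * ∑ z, P z * h z ^ 2 := by
  have expand : ∀ zs : Fin N → Z, (∏ i, P (zs i)) * (∑ j, h (zs j))^2
      = ∑ j, ∑ k, (∏ i, P (zs i)) * (h (zs j) * h (zs k)) := by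
    intro zs
    rw [sq, Finset.sum_mul_sum, Finset.mul_sum]
    exact Finset.sum_congr rfl fun j _ => by rw [Finset.mul_sum]
  rw [Finset.sum_congr rfl (fun zs _ => expand zs), Finset.sum_comm]
  have hj : ∀ j : Fin N,
      ∑ zs : Fin N → Z, ∑ k, (∏ i, P (zs i)) * (h (zs j) * h (zs k))
        = ∑ z, P z * h z ^ 2 := by
    intro j
    rw [Finset.sum_comm]
    have hk : ∀ k : Fin N, ∑ zs : Fin N → Z, (∏ i, P (zs i)) * (h (zs j) * h (zs k))
        = if k = j then ∑ z, P z * h z ^ 2 else 0 := by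
      intro k
      by_cases hkj : k = j
      · subst hkj
        simp only [if_pos rfl]
        have := sw_mean hPsum N (fun z => h z ^ 2) k
        simpa [sq] using this
      · rw [if_neg hkj]
        exact sw_cross h hmean (fun e => hkj e.symm)
    simp [hk]
  rw [Finset.sum_congr rfl (fun j _ => hj j)]
  simp [mul_comm]

lemma sw_cheb (hP : ∀ z, 0 ≤ P z) (hPsum : ∑ z, P z = 1) {N : ℕ} (hN : 0 < N)
    (d : Z → ℝ) (hd : ∑ z, P z * d z = 0) {ε : ℝ} (hε : 0 < ε) :
    ∑ zs : Fin N → Z, (if (N : ℝ) * ε ≤ |∑ j, d (zs j)| then ∏ i, P (zs i) else 0)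
      ≤ (∑ z, P z * d z ^ 2) / ((N : ℝ) * ε ^ 2) := by
  have hNε : (0:ℝ) < (N : ℝ) * ε := by positivity
  have key : ∀ zs : Fin N → Z,
      (if (N : ℝ) * ε ≤ |∑ j, d (zs j)| then ∏ i, P (zs i) else 0)
        ≤ (∏ i, P (zs i)) * (∑ j, d (zs j))^2 / ((N:ℝ) * ε)^2 := by
    intro zs
    have hw : 0 ≤ ∏ i, P (zs i) := Finset.prod_nonneg fun i _ => hP (zs i)
    by_cases hc : (N : ℝ) * ε ≤ |∑ j, d (zs j)|
    · rw [if_pos hc]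
      rw [le_div_iff₀ (by positivity)]
      have h2 : ((N:ℝ) * ε)^2 ≤ (∑ j, d (zs j))^2 := by
        rw [← sq_abs (∑ j, d (zs j))]
        exact pow_le_pow_left₀ hNε.le hc 2
      nlinarith
    · rw [if_neg hc]; positivity
  calc ∑ zs : Fin N → Z, (if (N : ℝ) * ε ≤ |∑ j, d (zs j)| then ∏ i, P (zs i) else 0)
      ≤ ∑ zs : Fin N → Z, (∏ i, P (zs i)) * (∑ j, d (zs j))^2 / ((N:ℝ) * ε)^2 :=
        Finset.sum_le_sum fun zs _ => key zs
    _ = (∑ zs : Fin N → Z, (∏ i, P (zs i)) * (∑ j, d (zs j))^2) / ((N:ℝ) * ε)^2 := by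
        rw [Finset.sum_div]
    _ = (N * ∑ z, P z * d z ^ 2) / ((N:ℝ) * ε)^2 := by rw [sw_var hPsum N d hd]
    _ = (∑ z, P z * d z ^ 2) / ((N : ℝ) * ε ^ 2) := by
        field_simp
end SWaux

lemma sw_conditional {A B : Type*} [Fintype A] [Fintype B]
    (q : A → B → ℝ) (hq : ∀ a b, 0 ≤ q a b) (hqsum : ∑ a, ∑ b, q a b = 1)
    (R : ℝ) (K : ℕ → ℕ) (hK : ∀ N, (K N : ℝ) ≤ (2:ℝ) ^ ((N:ℝ) * R))
    (corr : ∀ N : ℕ, (Fin N → A) → (Fin N → B) → Prop)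
    [hdc : ∀ N as bs, Decidable (corr N as bs)]
    (enc : ∀ N, (Fin N → A) → Fin (K N))
    (hinj : ∀ N (bs : Fin N → B) (as as' : Fin N → A),
      corr N as bs → corr N as' bs → enc N as = enc N as' → as = as')
    (herr : Tendsto (fun N : ℕ => ∑ as : Fin N → A, ∑ bs : Fin N → B,
        if ¬ corr N as bs then ∏ k, q (as k) (bs k) else 0) atTop (nhds 0)) :
    shannonH (fun z : A × B => q z.1 z.2) - shannonH (fun b => ∑ a, q a b) ≤ R := by
  classical
  have hP : ∀ z : A × B, 0 ≤ q z.1 z.2 := fun z => hq _ _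
  have hPsum : ∑ z : A × B, q z.1 z.2 = 1 := by
    rw [show (∑ z : A × B, q z.1 z.2) = ∑ a, ∑ b, q a b from
      Fintype.sum_prod_type (fun (z : A × B) => q z.1 z.2)]
    exact hqsum
  have hqB : ∀ b, 0 ≤ ∑ a, q a b := fun b => Finset.sum_nonneg fun a _ => hq a b
  have hqBsum : (∑ b, ∑ a, q a b) = 1 := by rw [Finset.sum_comm]; exact hqsum
  set f : A × B → ℝ :=
    fun z => if q z.1 z.2 = 0 then 0 else -Real.logb 2 (q z.1 z.2) with hfdef
  set fB : A × B → ℝ :=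
    fun z => if (∑ a, q a z.2) = 0 then 0 else -Real.logb 2 (∑ a, q a z.2) with hfBdef
  set μ : ℝ := shannonH (fun z : A × B => q z.1 z.2) - shannonH (fun b => ∑ a, q a b)
    with hμdef
  have hEf : ∑ z : A × B, q z.1 z.2 * f z = shannonH (fun z : A × B => q z.1 z.2) :=
    (shannonH_eq_sum_info _).symm
  have hEfB : ∑ z : A × B, q z.1 z.2 * fB z = shannonH (fun b => ∑ a, q a b) := by
    rw [shannonH_eq_sum_info (fun b => ∑ a, q a b)]
    rw [show (∑ z : A × B, q z.1 z.2 * fB z) = ∑ a, ∑ b, q a b * fB (a, b) from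
      Fintype.sum_prod_type (fun (z : A × B) => q z.1 z.2 * fB z)]
    rw [Finset.sum_comm]
    refine Finset.sum_congr rfl fun b _ => ?_
    simp only [hfBdef]
    rw [← Finset.sum_mul]
  set d : A × B → ℝ := fun z => f z - fB z - μ with hddef
  have hd : ∑ z : A × B, q z.1 z.2 * d z = 0 := by
    simp only [hddef, mul_sub, Finset.sum_sub_distrib]
    rw [hEf, hEfB, ← Finset.sum_mul, hPsum, one_mul, hμdef]
    ring
  set C : ℝ := ∑ z : A × B, q z.1 z.2 * d z ^ 2 with hCdef
  refine sw_rate_bound herr C ?_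
  intro ε hε N hN
  set w : (Fin N → A × B) → ℝ := fun zs => ∏ i, q (zs i).1 (zs i).2 with hwdef
  have hw0 : ∀ zs, 0 ≤ w zs := fun zs => Finset.prod_nonneg fun i _ => hP _
  set S : ℝ := ∑ zs : Fin N → A × B,
    if corr N (fun k => (zs k).1) (fun k => (zs k).2) ∧ |∑ j, d (zs j)| < (N:ℝ) * ε
    then w zs else 0 with hSdef
  have lower : 1 - (∑ as : Fin N → A, ∑ bs : Fin N → B,
      if ¬ corr N as bs then ∏ k, q (as k) (bs k) else 0) - C / ((N:ℝ) * ε ^ 2) ≤ S := by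
    have hsplit : (1:ℝ) = S + ∑ zs : Fin N → A × B,
        if ¬ (corr N (fun k => (zs k).1) (fun k => (zs k).2) ∧ |∑ j, d (zs j)| < (N:ℝ) * ε)
        then w zs else 0 := by
      rw [hSdef, ← Finset.sum_add_distrib,
        ← sw_mass (P := fun z : A × B => q z.1 z.2) hPsum N]
      refine Finset.sum_congr rfl fun zs _ => ?_
      by_cases h : corr N (fun k => (zs k).1) (fun k => (zs k).2) ∧ |∑ j, d (zs j)| < (N:ℝ) * ε
      · rw [if_pos h, if_neg (not_not_intro h), add_zero]
      · rw [if_neg h, if_pos h, zero_add]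
    have herr_eq : (∑ as : Fin N → A, ∑ bs : Fin N → B,
        if ¬ corr N as bs then ∏ k, q (as k) (bs k) else 0)
        = ∑ zs : Fin N → A × B,
          if ¬ corr N (fun k => (zs k).1) (fun k => (zs k).2) then w zs else 0 :=
      sw_pair_sum N (fun as bs => if ¬ corr N as bs then ∏ k, q (as k) (bs k) else 0)
    have hbound : (∑ zs : Fin N → A × B,
        if ¬ (corr N (fun k => (zs k).1) (fun k => (zs k).2) ∧ |∑ j, d (zs j)| < (N:ℝ) * ε)
        then w zs else 0)
        ≤ (∑ zs : Fin N → A × B,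
            if ¬ corr N (fun k => (zs k).1) (fun k => (zs k).2) then w zs else 0)
          + ∑ zs : Fin N → A × B, if (N:ℝ) * ε ≤ |∑ j, d (zs j)| then w zs else 0 := by
      rw [← Finset.sum_add_distrib]
      refine Finset.sum_le_sum fun zs _ => ?_
      by_cases h1 : corr N (fun k => (zs k).1) (fun k => (zs k).2)
      · by_cases h2 : |∑ j, d (zs j)| < (N:ℝ) * ε
        · rw [if_neg (not_not_intro ⟨h1, h2⟩)]
          split_ifs <;> linarith [hw0 zs]
        · rw [if_pos (by tauto), if_neg (not_not_intro h1), if_pos (not_lt.1 h2), zero_add]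
      · rw [if_pos (by tauto), if_pos h1]
        by_cases h2 : (N:ℝ) * ε ≤ |∑ j, d (zs j)|
        · rw [if_pos h2]; linarith [hw0 zs]
        · rw [if_neg h2, add_zero]
    have hcheb : (∑ zs : Fin N → A × B, if (N:ℝ) * ε ≤ |∑ j, d (zs j)| then w zs else 0)
        ≤ C / ((N:ℝ) * ε ^ 2) :=
      sw_cheb (P := fun z : A × B => q z.1 z.2) hP hPsum hN d hd hε
    rw [herr_eq]
    linarith [hsplit, hbound, hcheb]
  have upper : S ≤ (2:ℝ) ^ ((N:ℝ) * (R - μ + ε)) := by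
    set c : ℝ := (2:ℝ) ^ (-((N:ℝ) * (μ - ε))) with hcdef
    have hc0 : (0:ℝ) ≤ c := (Real.rpow_pos_of_pos two_pos _).le
    set G : (Fin N → A) → (Fin N → B) → ℝ := fun as bs =>
      if corr N as bs ∧ |∑ j, d (as j, bs j)| < (N:ℝ)*ε then ∏ k, q (as k) (bs k) else 0
      with hGdef
    have h := sw_pair_sum N G
    have h2 : (∑ zs : Fin N → A × B, G (fun k => (zs k).1) (fun k => (zs k).2)) = S := by
      rw [hSdef]
    have hS2 : S = ∑ bs : Fin N → B, ∑ as : Fin N → A, G as bs := by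
      rw [← h2, ← h, Finset.sum_comm]
    rw [hS2]
    have key : ∀ bs : Fin N → B, (∑ as : Fin N → A, G as bs)
        ≤ (K N : ℝ) * ((∏ k, (∑ a, q a (bs k))) * c) := by
      intro bs
      have point : ∀ as : Fin N → A, G as bs
          ≤ (if corr N as bs then (∏ k, (∑ a, q a (bs k))) * c else 0) := by
        intro as
        simp only [hGdef]
        by_cases h1 : corr N as bs
        · by_cases h2 : |∑ j, d (as j, bs j)| < (N:ℝ)*ε
          · rw [if_pos ⟨h1, h2⟩, if_pos h1]
            by_cases hw : (∏ k, q (as k) (bs k)) = 0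
            · rw [hw]
              have : (0:ℝ) ≤ ∏ k, (∑ a, q a (bs k)) := Finset.prod_nonneg fun k _ => hqB _
              positivity
            · have hpos : ∀ k, 0 < q (as k) (bs k) := by
                intro k
                rcases (hq (as k) (bs k)).lt_or_eq with hlt | heq
                · exact hlt
                · exact absurd (Finset.prod_eq_zero (Finset.mem_univ k) heq.symm) hw
              have hposB : ∀ k, 0 < ∑ a, q a (bs k) := fun k =>
                lt_of_lt_of_le (hpos k)
                  (Finset.single_le_sum (fun a _ => hq a (bs k)) (Finset.mem_univ (as k)))
              have ef : ∀ k, f (as k, bs k) = -Real.logb 2 (q (as k) (bs k)) := by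
                intro k; rw [hfdef]; exact if_neg (ne_of_gt (hpos k))
              have efB : ∀ k, fB (as k, bs k) = -Real.logb 2 (∑ a, q a (bs k)) := by
                intro k; rw [hfBdef]; exact if_neg (ne_of_gt (hposB k))
              have e1 : (∏ k, q (as k) (bs k)) = (2:ℝ) ^ (-∑ k : Fin N, f (as k, bs k)) := by
                have hls : -∑ k : Fin N, f (as k, bs k)
                    = ∑ k : Fin N, Real.logb 2 (q (as k) (bs k)) := by
                  rw [← Finset.sum_neg_distrib]
                  exact Finset.sum_congr rfl fun k _ => by rw [ef k, neg_neg]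
                rw [hls, Real.rpow_sum_of_pos two_pos]
                exact (Finset.prod_congr rfl fun k _ =>
                  (Real.rpow_logb two_pos (by norm_num) (hpos k))).symm
              have e2 : (∏ k, (∑ a, q a (bs k))) = (2:ℝ) ^ (-∑ k : Fin N, fB (as k, bs k)) := by
                have hls : -∑ k : Fin N, fB (as k, bs k)
                    = ∑ k : Fin N, Real.logb 2 (∑ a, q a (bs k)) := by
                  rw [← Finset.sum_neg_distrib]
                  exact Finset.sum_congr rfl fun k _ => by rw [efB k, neg_neg]
                rw [hls, Real.rpow_sum_of_pos two_pos]
                exact (Finset.prod_congr rfl fun k _ =>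
                  (Real.rpow_logb two_pos (by norm_num) (hposB k))).symm
              have hdsum : ∑ j : Fin N, d (as j, bs j)
                  = (∑ k : Fin N, f (as k, bs k)) - (∑ k : Fin N, fB (as k, bs k)) - N * μ := by
                simp only [hddef, Finset.sum_sub_distrib, Finset.sum_const,
                  Finset.card_univ, Fintype.card_fin, nsmul_eq_mul]
              have htyp := (abs_lt.1 h2).1
              rw [e1, e2, hcdef, ← Real.rpow_add two_pos]
              refine Real.rpow_le_rpow_of_exponent_le one_le_two ?_
              rw [hdsum] at htyp
              linarith
          · rw [if_neg (by tauto), if_pos h1]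
            have : (0:ℝ) ≤ ∏ k, (∑ a, q a (bs k)) := Finset.prod_nonneg fun k _ => hqB _
            positivity
        · rw [if_neg (by tauto), if_neg h1]
      calc (∑ as : Fin N → A, G as bs)
          ≤ ∑ as : Fin N → A, (if corr N as bs then (∏ k, (∑ a, q a (bs k))) * c else 0) :=
            Finset.sum_le_sum fun as _ => point as
        _ = ((Finset.univ.filter (fun as : Fin N → A => corr N as bs)).card : ℝ)
            * ((∏ k, (∑ a, q a (bs k))) * c) := by
            rw [← Finset.sum_filter, Finset.sum_const, nsmul_eq_mul]
        _ ≤ (K N : ℝ) * ((∏ k, (∑ a, q a (bs k))) * c) := by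
            have h0 : (0:ℝ) ≤ (∏ k, (∑ a, q a (bs k))) * c :=
              mul_nonneg (Finset.prod_nonneg fun k _ => hqB _) hc0
            refine mul_le_mul_of_nonneg_right ?_ h0
            have hcard : (Finset.univ.filter (fun as : Fin N → A => corr N as bs)).card ≤ K N := by
              have hcc := Finset.card_le_card_of_injOn
                (s := Finset.univ.filter (fun as : Fin N → A => corr N as bs))
                (t := Finset.univ) (enc N)
                (fun as _ => Finset.mem_univ _)
                (fun as ha as' ha' he => hinj N bs as as'
                  (Finset.mem_filter.1 ha).2 (Finset.mem_filter.1 ha').2 he)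
              simpa using hcc
            exact_mod_cast hcard
    calc (∑ bs : Fin N → B, ∑ as : Fin N → A, G as bs)
        ≤ ∑ bs : Fin N → B, (K N : ℝ) * ((∏ k, (∑ a, q a (bs k))) * c) :=
          Finset.sum_le_sum fun bs _ => key bs
      _ = (K N : ℝ) * c := by
          rw [← Finset.mul_sum, ← Finset.sum_mul,
            sw_mass (P := fun b => ∑ a, q a b) hqBsum N, one_mul]
      _ ≤ (2:ℝ) ^ ((N:ℝ) * R) * c := mul_le_mul_of_nonneg_right (hK N) hc0
      _ = (2:ℝ) ^ ((N:ℝ) * (R - μ + ε)) := by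
          rw [hcdef, ← Real.rpow_add two_pos]
          congr 1; ring
  linarith [lower, upper]

/-- **Converse part of the Slepian–Wolf theorem.**  Sources `(Xᵢ, Yᵢ)` are
i.i.d. with joint pmf `p` on finite alphabets.  For each block length `N`,
encoder 1 maps `X^N` into an index set of size `K₁ N ≤ 2^{N·R₁}`, encoder 2
maps `Y^N` into an index set of size `K₂ N ≤ 2^{N·R₂}`, and a decoder maps
the pair of indices to estimates `(X̂^N, Ŷ^N)`.  If the probability of error
`P((X̂^N, Ŷ^N) ≠ (X^N, Y^N))` (under the product measure) tends to `0` as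
`N → ∞`, then `R₁ ≥ H(X|Y)`, `R₂ ≥ H(Y|X)`, and `R₁ + R₂ ≥ H(X,Y)`,
where `H` is the Shannon entropy, `H(X|Y) = H(X,Y) − H(Y)` and
`H(Y|X) = H(X,Y) − H(X)`. -/
theorem slepian_wolf_converse
    {X Y : Type*} [Fintype X] [Fintype Y] [DecidableEq X] [DecidableEq Y]
    (p : X → Y → ℝ) (hp : ∀ x y, 0 ≤ p x y) (hsum : ∑ x, ∑ y, p x y = 1)
    (R₁ R₂ : ℝ) (K₁ K₂ : ℕ → ℕ)
    (enc₁ : ∀ N : ℕ, (Fin N → X) → Fin (K₁ N))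
    (enc₂ : ∀ N : ℕ, (Fin N → Y) → Fin (K₂ N))
    (dec : ∀ N : ℕ, Fin (K₁ N) × Fin (K₂ N) → (Fin N → X) × (Fin N → Y))
    (hK₁ : ∀ N : ℕ, (K₁ N : ℝ) ≤ (2 : ℝ) ^ ((N : ℝ) * R₁))
    (hK₂ : ∀ N : ℕ, (K₂ N : ℝ) ≤ (2 : ℝ) ^ ((N : ℝ) * R₂))
    (herr : Tendsto (fun N : ℕ =>
        ∑ xs : Fin N → X, ∑ ys : Fin N → Y,
          if dec N (enc₁ N xs, enc₂ N ys) ≠ (xs, ys)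
          then ∏ k, p (xs k) (ys k) else 0)
      atTop (nhds 0)) :
    shannonH (fun z : X × Y => p z.1 z.2)
        - shannonH (fun y => ∑ x, p x y) ≤ R₁ ∧
    shannonH (fun z : X × Y => p z.1 z.2)
        - shannonH (fun x => ∑ y, p x y) ≤ R₂ ∧
    shannonH (fun z : X × Y => p z.1 z.2) ≤ R₁ + R₂ := by
  classical
  have hPsum : ∑ z : X × Y, p z.1 z.2 = 1 := by
    rw [show (∑ z : X × Y, p z.1 z.2) = ∑ x, ∑ y, p x y from
      Fintype.sum_prod_type (fun (z : X × Y) => p z.1 z.2)]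
    exact hsum
  refine ⟨?_, ?_, ?_⟩
  · -- rate R₁ : condition on Y
    refine sw_conditional p hp hsum R₁ K₁ hK₁
      (fun N as bs => dec N (enc₁ N as, enc₂ N bs) = (as, bs)) enc₁
      (fun N bs as as' h h' he => ?_) (herr.congr fun N => ?_)
    · have : (as, bs) = ((as', bs) : (Fin N → X) × (Fin N → Y)) := by
        rw [← h, ← h', he]
      exact congrArg Prod.fst this
    · refine Finset.sum_congr rfl fun xs _ => Finset.sum_congr rfl fun ys _ => ?_
      exact if_congr Iff.rfl rfl rfl
  · -- rate R₂ : condition on X, apply with roles swapped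
    have hswap : shannonH (fun z : Y × X => p z.2 z.1)
        = shannonH (fun z : X × Y => p z.1 z.2) :=
      shannonH_equiv (Equiv.prodComm Y X) (fun z : X × Y => p z.1 z.2)
    have hinj2 : ∀ (N : ℕ) (bs : Fin N → X) (as as' : Fin N → Y),
        dec N (enc₁ N bs, enc₂ N as) = (bs, as) →
        dec N (enc₁ N bs, enc₂ N as') = (bs, as') →
        enc₂ N as = enc₂ N as' → as = as' := by
      intro N bs as as' h h' he
      have hpq : (bs, as) = ((bs, as') : (Fin N → X) × (Fin N → Y)) := by
        rw [← h, ← h', he]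
      exact congrArg Prod.snd hpq
    have herr2 : Tendsto (fun N : ℕ => ∑ as : Fin N → Y, ∑ bs : Fin N → X,
        if ¬ dec N (enc₁ N bs, enc₂ N as) = (bs, as)
        then ∏ k, p (bs k) (as k) else 0) atTop (nhds 0) := by
      refine herr.congr fun N => ?_
      rw [Finset.sum_comm]
    have hmain := sw_conditional (fun y x => p x y) (fun y x => hp x y)
      (by rw [Finset.sum_comm]; exact hsum) R₂ K₂ hK₂
      (fun N as bs => dec N (enc₁ N bs, enc₂ N as) = (bs, as)) enc₂ hinj2 herr2
    rw [hswap] at hmain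
    exact hmain
  · -- joint rate
    have hone : shannonH (fun _ : Unit => (1:ℝ)) = 0 := by simp [shannonH]
    have hconst : (fun (_ : Unit) => ∑ a : X × Y, p a.1 a.2) = fun _ : Unit => (1:ℝ) :=
      funext fun _ => hPsum
    have hPUnit : shannonH (fun z : (X × Y) × Unit => p z.1.1 z.1.2)
        = shannonH (fun z : X × Y => p z.1 z.2) :=
      shannonH_equiv (Equiv.prodPUnit (X × Y)) (fun z : X × Y => p z.1 z.2)
    have hinj3 : ∀ (N : ℕ) (bs : Fin N → Unit) (zs zs' : Fin N → X × Y),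
        dec N (enc₁ N (fun k => (zs k).1), enc₂ N (fun k => (zs k).2))
          = (fun k => (zs k).1, fun k => (zs k).2) →
        dec N (enc₁ N (fun k => (zs' k).1), enc₂ N (fun k => (zs' k).2))
          = (fun k => (zs' k).1, fun k => (zs' k).2) →
        finProdFinEquiv (enc₁ N (fun k => (zs k).1), enc₂ N (fun k => (zs k).2))
          = finProdFinEquiv (enc₁ N (fun k => (zs' k).1), enc₂ N (fun k => (zs' k).2)) →
        zs = zs' := by
      intro N bs zs zs' h h' he
      have hpe : (enc₁ N (fun k => (zs k).1), enc₂ N (fun k => (zs k).2))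
          = (enc₁ N (fun k => (zs' k).1), enc₂ N (fun k => (zs' k).2)) :=
        finProdFinEquiv.injective he
      have hpair : ((fun k => (zs k).1 : Fin N → X), (fun k => (zs k).2 : Fin N → Y))
          = ((fun k => (zs' k).1 : Fin N → X), (fun k => (zs' k).2 : Fin N → Y)) := by
        rw [← h, ← h', hpe]
      funext k
      exact Prod.ext (congrFun (congrArg Prod.fst hpair) k)
        (congrFun (congrArg Prod.snd hpair) k)
    have herr3 : Tendsto (fun N : ℕ => ∑ zs : Fin N → X × Y, ∑ bs : Fin N → Unit,
        if ¬ dec N (enc₁ N (fun k => (zs k).1), enc₂ N (fun k => (zs k).2))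
            = (fun k => (zs k).1, fun k => (zs k).2)
        then ∏ k, p (zs k).1 (zs k).2 else 0) atTop (nhds 0) := by
      refine herr.congr fun N => ?_
      rw [sw_pair_sum N (fun xs ys =>
        if dec N (enc₁ N xs, enc₂ N ys) ≠ (xs, ys) then ∏ k, p (xs k) (ys k) else 0)]
      refine Finset.sum_congr rfl fun zs _ => ?_
      rw [Fintype.sum_unique]
    have hmain := sw_conditional (fun (z : X × Y) (_ : Unit) => p z.1 z.2)
      (fun z _ => hp z.1 z.2)
      (by simpa using hPsum)
      (R₁ + R₂) (fun N => K₁ N * K₂ N)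
      (fun N => by
        push_cast
        calc (K₁ N : ℝ) * (K₂ N : ℝ)
            ≤ (2:ℝ) ^ ((N:ℝ) * R₁) * (2:ℝ) ^ ((N:ℝ) * R₂) :=
              mul_le_mul (hK₁ N) (hK₂ N) (Nat.cast_nonneg _)
                (Real.rpow_nonneg (by norm_num) _)
          _ = (2:ℝ) ^ ((N:ℝ) * (R₁ + R₂)) := by
              rw [← Real.rpow_add two_pos]; congr 1; ring)
      (fun N zs _ => dec N (enc₁ N (fun k => (zs k).1), enc₂ N (fun k => (zs k).2))
        = (fun k => (zs k).1, fun k => (zs k).2))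
      (fun N zs => finProdFinEquiv
        (enc₁ N (fun k => (zs k).1), enc₂ N (fun k => (zs k).2)))
      hinj3 herr3
    rw [hPUnit, hconst, hone] at hmain
    linarith
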